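/- Let Θ ∈ ℝ^{p×p} be symmetric positive semidefinite, let α > 0, let X ∈ ℝ^{p×n}, and let C ∈ ℝ^{p×k} have full column rank (equivalently, CᵀC is invertible). Then the matrix (2/α)·CᵀΘC + CᵀC is invertible, and X_C* = ((2/α)·CᵀΘC + CᵀC)⁻¹CᵀX is a global minimizer of the function f(X̃) = tr(X̃ᵀCᵀΘCX̃) + (α/2)·‖X − CX̃‖_F² over X̃ ∈ ℝ^{k×n}; that is, f(X_C*) ≤ f(X̃) for all X̃ ∈ ℝ^{k×n}. -/

import Mathlib

open Matrix

/-- Frobenius norm of a real matrix. -/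
noncomputable def frobNorm {m n : ℕ} (A : Matrix (Fin m) (Fin n) ℝ) : ℝ :=
  Real.sqrt (∑ i, ∑ j, (A i j) ^ 2)

lemma frobNorm_sq {m n : ℕ} (A : Matrix (Fin m) (Fin n) ℝ) :
    frobNorm A ^ 2 = (Aᵀ * A).trace := by
  rw [frobNorm, Real.sq_sqrt (by positivity)]
  simp only [trace, diag, mul_apply, transpose_apply]
  rw [Finset.sum_comm]
  simp [sq]

lemma trace_nonneg {k n : ℕ} {B : Matrix (Fin k) (Fin k) ℝ} (hB : B.PosSemidef)
    (D : Matrix (Fin k) (Fin n) ℝ) : 0 ≤ (Dᵀ * B * D).trace := by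
  simp only [trace, diag, mul_apply, transpose_apply]
  refine Finset.sum_nonneg fun j _ => ?_
  have h := hB.dotProduct_mulVec_nonneg (fun i => D i j)
  simp only [dotProduct, mulVec, star, mul_apply, Finset.mul_sum] at h
  simp only [Finset.sum_mul]
  rw [Finset.sum_comm]
  exact h.trans_eq (Finset.sum_congr rfl fun x _ => Finset.sum_congr rfl fun y _ => by ring)

lemma smul_posSemidef {k : ℕ} {c : ℝ} (hc : 0 ≤ c) {A : Matrix (Fin k) (Fin k) ℝ}
    (hA : A.PosSemidef) : (c • A).PosSemidef := by
  refine posSemidef_iff_dotProduct_mulVec.mpr ⟨?_, fun x => ?_⟩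
  · have h := hA.1
    unfold Matrix.IsHermitian at h ⊢
    rw [conjTranspose_smul, h]
    norm_num
  · rw [smul_mulVec, dotProduct_smul, smul_eq_mul]
    exact mul_nonneg hc (hA.dotProduct_mulVec_nonneg x)

lemma CtC_posDef {p k : ℕ} {C : Matrix (Fin p) (Fin k) ℝ} (hC : IsUnit (Cᵀ * C)) :
    (Cᵀ * C).PosDef := by
  have hpsd : (Cᵀ * C).PosSemidef := by
    have := posSemidef_conjTranspose_mul_self C
    exact this
  refine posDef_iff_dotProduct_mulVec.mpr ⟨hpsd.1, fun x hx => lt_of_le_of_ne (hpsd.dotProduct_mulVec_nonneg x) fun h0 => hx ?_⟩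
  have hform : star x ⬝ᵥ (Cᵀ * C) *ᵥ x = (C *ᵥ x) ⬝ᵥ (C *ᵥ x) := by
    rw [← mulVec_mulVec, dotProduct_mulVec]
    congr 1
    · show x ᵥ* Cᵀ = C *ᵥ x
      rw [vecMul_transpose]
  have hCx : C *ᵥ x = 0 := by
    rw [← dotProduct_self_eq_zero (v := C *ᵥ x), ← hform, ← h0]
  have hinj : Function.Injective ((Cᵀ * C).mulVec) := mulVec_injective_iff_isUnit.mpr hC
  have : (Cᵀ * C) *ᵥ x = (Cᵀ * C) *ᵥ 0 := by
    rw [← mulVec_mulVec, hCx, mulVec_zero, mulVec_zero]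
  exact hinj this


/-- closed-form update rule for the coarsened features `X_C`:
`((2/α)·CᵀΘC + CᵀC)` is invertible and `X_C* = ((2/α)·CᵀΘC + CᵀC)⁻¹CᵀX` globally
minimizes `f(X̃) = tr(X̃ᵀCᵀΘCX̃) + (α/2)·‖X − CX̃‖_F²`. -/
theorem XC_update_global_min (p k n : ℕ)
    (Θ : Matrix (Fin p) (Fin p) ℝ) (hΘ : Θ.PosSemidef)
    (α : ℝ) (hα : 0 < α) (X : Matrix (Fin p) (Fin n) ℝ)
    (C : Matrix (Fin p) (Fin k) ℝ) (hC : IsUnit (Cᵀ * C)) :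
    IsUnit ((2 / α) • (Cᵀ * Θ * C) + Cᵀ * C) ∧
      ∀ Xt : Matrix (Fin k) (Fin n) ℝ,
        (((((2 / α) • (Cᵀ * Θ * C) + Cᵀ * C)⁻¹ * Cᵀ * X)ᵀ * (Cᵀ * Θ * C) *
            (((2 / α) • (Cᵀ * Θ * C) + Cᵀ * C)⁻¹ * Cᵀ * X)).trace
          + α / 2 * frobNorm (X - C * (((2 / α) • (Cᵀ * Θ * C) + Cᵀ * C)⁻¹ * Cᵀ * X)) ^ 2)
        ≤ (Xtᵀ * (Cᵀ * Θ * C) * Xt).trace + α / 2 * frobNorm (X - C * Xt) ^ 2 := by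
  set A : Matrix (Fin k) (Fin k) ℝ := Cᵀ * Θ * C with hAdef
  have hA : A.PosSemidef := by
    have := hΘ.conjTranspose_mul_mul_same C
    exact this
  set B : Matrix (Fin k) (Fin k) ℝ := (2 / α) • A + Cᵀ * C with hBdef
  have hAsmul : ((2 / α) • A).PosSemidef := smul_posSemidef (by positivity) hA
  have hBpd : B.PosDef := Matrix.PosDef.posSemidef_add hAsmul (CtC_posDef hC)
  have hBu : IsUnit B := hBpd.isUnit
  have hBpsd : B.PosSemidef := hBpd.posSemidef
  have hBsymm : Bᵀ = B := hBpsd.1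
  refine ⟨hBu, fun Xt => ?_⟩
  set Xs : Matrix (Fin k) (Fin n) ℝ := B⁻¹ * Cᵀ * X with hXsdef
  have hBXs : B * Xs = Cᵀ * X := by
    rw [hXsdef, ← Matrix.mul_assoc, ← Matrix.mul_assoc,
      Matrix.mul_nonsing_inv B ((Matrix.isUnit_iff_isUnit_det B).mp hBu), Matrix.one_mul]
  -- general expansion of the objective
  have hf : ∀ Y : Matrix (Fin k) (Fin n) ℝ,
      (Yᵀ * A * Y).trace + α / 2 * frobNorm (X - C * Y) ^ 2
        = α / 2 * ((Yᵀ * B * Y).trace - 2 * (Yᵀ * (Cᵀ * X)).trace + (Xᵀ * X).trace) := by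
    intro Y
    have hB_exp : (Yᵀ * B * Y).trace
        = (2 / α) * (Yᵀ * A * Y).trace + (Yᵀ * (Cᵀ * C) * Y).trace := by
      rw [hBdef, Matrix.mul_add, Matrix.add_mul, trace_add, Matrix.mul_smul,
        Matrix.smul_mul, trace_smul, smul_eq_mul]
    have hfrob : frobNorm (X - C * Y) ^ 2
        = (Xᵀ * X).trace - 2 * (Yᵀ * (Cᵀ * X)).trace + (Yᵀ * (Cᵀ * C) * Y).trace := by
      rw [frobNorm_sq, Matrix.transpose_sub, Matrix.sub_mul, Matrix.mul_sub,
        Matrix.mul_sub, trace_sub, trace_sub, trace_sub]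
      have h1 : ((C * Y)ᵀ * X).trace = (Yᵀ * (Cᵀ * X)).trace := by
        rw [Matrix.transpose_mul, Matrix.mul_assoc]
      have h2 : (Xᵀ * (C * Y)).trace = (Yᵀ * (Cᵀ * X)).trace := by
        rw [← trace_transpose (Xᵀ * (C * Y)), Matrix.transpose_mul, Matrix.transpose_mul,
          Matrix.transpose_transpose, Matrix.mul_assoc]
      have h3 : ((C * Y)ᵀ * (C * Y)).trace = (Yᵀ * (Cᵀ * C) * Y).trace := by
        rw [Matrix.transpose_mul, Matrix.mul_assoc, Matrix.mul_assoc, Matrix.mul_assoc]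
      rw [h1, h2, h3]
      ring
    rw [hB_exp, hfrob]
    field_simp
    ring
  rw [hf Xs, hf Xt]
  simp only [Matrix.mul_assoc]
  rw [← hBXs]
  set D : Matrix (Fin k) (Fin n) ℝ := Xt - Xs with hDdef
  have hDtr : (Dᵀ * (B * D)).trace
      = (Xtᵀ * (B * Xt)).trace - 2 * (Xtᵀ * (B * Xs)).trace + (Xsᵀ * (B * Xs)).trace := by
    have hsym : (Xsᵀ * (B * Xt)).trace = (Xtᵀ * (B * Xs)).trace := by
      rw [← trace_transpose (Xsᵀ * (B * Xt)), Matrix.transpose_mul, Matrix.transpose_mul,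
        Matrix.transpose_transpose, hBsymm, Matrix.mul_assoc]
    rw [hDdef]
    simp only [Matrix.transpose_sub, Matrix.sub_mul, Matrix.mul_sub, trace_sub]
    rw [hsym]
    ring
  have hD0 : 0 ≤ (Dᵀ * (B * D)).trace := by
    have := trace_nonneg hBpsd D
    rwa [Matrix.mul_assoc] at this
  have hh : 0 ≤ α / 2 * (Dᵀ * (B * D)).trace := mul_nonneg (by linarith) hD0
  nlinarith [hh, hDtr]
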